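/- Let D be a simple digraph on n ≥ 1 vertices with at least one edge, let k ≤ n² be a positive integer, and let D' be obtained from D by adding n³ isolated vertices. Then D has a directed cut of size at least k if and only if D' has an arrangement of value at least k·n³. -/

import Mathlib

open Finset

/-- Integer value of an edge under an arrangement: max {0, π(head) − π(tail)}. -/
def edgeVal {n : ℕ} (π : Equiv.Perm (Fin n)) (e : Fin n × Fin n) : ℤ :=
  max 0 ((π e.2 : ℤ) - (π e.1 : ℤ))

/-- Value of an arrangement (integer version). -/
def arrVal {n : ℕ} (E : Finset (Fin n × Fin n)) (π : Equiv.Perm (Fin n)) : ℤ :=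
  ∑ e ∈ E, edgeVal π e

/-- Value of an arrangement (natural-number version, using truncated subtraction). -/
def valN {n : ℕ} (E : Finset (Fin n × Fin n)) (π : Equiv.Perm (Fin n)) : ℕ :=
  ∑ e ∈ E, ((π e.2 : ℕ) - (π e.1 : ℕ))

/-- Size of the k-th cut of an arrangement (positions are 0-indexed, cuts 1-indexed:
`cutAt E π k` counts edges from the first k vertices to the rest). -/
def cutAt {n : ℕ} (E : Finset (Fin n × Fin n)) (π : Equiv.Perm (Fin n)) (k : ℕ) : ℕ :=
  (E.filter (fun e => (π e.1 : ℕ) < k ∧ k ≤ (π e.2 : ℕ))).card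

def outdeg {n : ℕ} (E : Finset (Fin n × Fin n)) (v : Fin n) : ℕ :=
  (E.filter (fun e => e.1 = v)).card

def indeg {n : ℕ} (E : Finset (Fin n × Fin n)) (v : Fin n) : ℕ :=
  (E.filter (fun e => e.2 = v)).card

/-- Number of edges in the directed cut from X to its complement. -/
def dicut {n : ℕ} (E : Finset (Fin n × Fin n)) (X : Finset (Fin n)) : ℕ :=
  (E.filter (fun e => e.1 ∈ X ∧ e.2 ∉ X)).card

lemma card_filter_val_lt (N t : ℕ) (ht : t ≤ N) :
    ((univ : Finset (Fin N)).filter (fun j : Fin N => (j : ℕ) < t)).card = t := by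
  have : ((univ : Finset (Fin N)).filter (fun j : Fin N => (j : ℕ) < t)).image Fin.val
      = Finset.range t := by
    ext a
    simp only [mem_image, mem_filter, mem_univ, true_and, mem_range]
    constructor
    · rintro ⟨j, hj, rfl⟩; exact hj
    · intro ha; exact ⟨⟨a, lt_of_lt_of_le ha ht⟩, ha, rfl⟩
  have h2 := Finset.card_image_of_injective
    ((univ : Finset (Fin N)).filter (fun j : Fin N => (j : ℕ) < t)) (Fin.val_injective)
  rw [this, Finset.card_range] at h2
  exact h2.symm

lemma sort_strict {N : ℕ} (f : Fin N → ℕ) (a b : Fin N) (h : f a < f b) :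
    (((Tuple.sort f)⁻¹ a : Fin N) : ℕ) < (((Tuple.sort f)⁻¹ b : Fin N) : ℕ) := by
  by_contra hc
  push_neg at hc
  have hle : (Tuple.sort f)⁻¹ b ≤ (Tuple.sort f)⁻¹ a := hc
  have := Tuple.monotone_sort f hle
  simp only [Function.comp_apply, Equiv.Perm.inv_def, Equiv.apply_symm_apply] at this
  omega

lemma pos_lt_card {N : ℕ} (π : Equiv.Perm (Fin N)) (S : Finset (Fin N))
    (H : ∀ a ∈ S, ∀ b ∉ S, (π a : ℕ) < (π b : ℕ)) :
    (∀ a ∈ S, (π a : ℕ) < S.card) ∧ (∀ b ∉ S, S.card ≤ (π b : ℕ)) := by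
  have hcard : (S.image (fun v => π v)).card = S.card :=
    Finset.card_image_of_injective S π.injective
  constructor
  · intro a ha
    have hsub : ((univ : Finset (Fin N)).filter (fun j : Fin N => (j : ℕ) < (π a : ℕ) + 1))
        ⊆ S.image (fun v => π v) := by
      intro j hj
      simp only [mem_filter, mem_univ, true_and] at hj
      have hj' : (j : ℕ) ≤ (π a : ℕ) := by omega
      by_cases hv : π⁻¹ j ∈ S
      · exact mem_image.2 ⟨π⁻¹ j, hv, π.apply_symm_apply j⟩
      · exfalso
        have := H a ha _ hv
        rw [Equiv.Perm.inv_def, π.apply_symm_apply] at this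
        omega
    have := Finset.card_le_card hsub
    rw [hcard, card_filter_val_lt N ((π a : ℕ) + 1) (π a).is_lt] at this
    omega
  · intro b hb
    have hsub : S.image (fun v => π v) ⊆ ((univ : Finset (Fin N)).filter (fun j : Fin N => (j : ℕ) < (π b : ℕ))) := by
      intro j hj
      obtain ⟨v, hv, rfl⟩ := mem_image.1 hj
      simp only [mem_filter, mem_univ, true_and]
      exact H v hv b hb
    have := Finset.card_le_card hsub
    rw [hcard, card_filter_val_lt N (π b : ℕ) (le_of_lt (π b).is_lt)] at this
    exact this


/-- D has a directed cut of size ≥ k iff D plus n³ isolated vertices has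
an arrangement of value ≥ k·n³ (for 1 ≤ k ≤ n², D with at least one edge). -/
theorem stmt10 (n k : ℕ) (hn : 1 ≤ n) (hk : 1 ≤ k) (hk2 : k ≤ n ^ 2)
    (E : Finset (Fin n × Fin n)) (hs : ∀ e ∈ E, e.1 ≠ e.2) (hne : E.Nonempty) :
    (∃ X : Finset (Fin n), k ≤ dicut E X) ↔
      (∃ π : Equiv.Perm (Fin (n + n ^ 3)),
        k * n ^ 3 ≤
          valN (E.image (fun e => (Fin.castAdd (n ^ 3) e.1, Fin.castAdd (n ^ 3) e.2))) π) := by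
  classical
  have hembinj : Function.Injective
      (fun e : Fin n × Fin n => (Fin.castAdd (n ^ 3) e.1, Fin.castAdd (n ^ 3) e.2)) := by
    intro a b h
    simp only [Prod.mk.injEq, Fin.castAdd_inj] at h
    exact Prod.ext h.1 h.2
  constructor
  · rintro ⟨X, hX⟩
    set f : Fin (n + n ^ 3) → ℕ := fun v =>
      if h : (v : ℕ) < n then (if (⟨(v : ℕ), h⟩ : Fin n) ∈ X then 0 else 2) else 1 with hf
    refine ⟨(Tuple.sort f)⁻¹, ?_⟩
    set π := (Tuple.sort f)⁻¹ with hπ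
    have hfcast : ∀ w : Fin n, f (Fin.castAdd (n ^ 3) w) = if w ∈ X then 0 else 2 := by
      intro w
      simp only [hf, Fin.coe_castAdd, w.is_lt, dif_pos, Fin.eta]
    set S : Finset (Fin (n + n ^ 3)) := univ.filter (fun v => f v = 0) with hS
    set T : Finset (Fin (n + n ^ 3)) := univ.filter (fun v => f v ≤ 1) with hT
    have hSeq : S = X.image (Fin.castAdd (n ^ 3)) := by
      ext v
      simp only [hS, mem_filter, mem_univ, true_and, mem_image]
      constructor
      · intro hv
        by_cases h : (v : ℕ) < n
        · refine ⟨⟨(v : ℕ), h⟩, ?_, by ext; simp⟩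
          simp only [hf, dif_pos h] at hv
          by_contra hx
          rw [if_neg hx] at hv
          omega
        · simp only [hf, dif_neg h] at hv
          omega
      · rintro ⟨w, hw, rfl⟩
        rw [hfcast w, if_pos hw]
    have hScard : S.card = X.card := by
      rw [hSeq, Finset.card_image_of_injective _ (Fin.castAdd_injective _ _)]
    have hTcard : T.card = X.card + n ^ 3 := by
      have hTeq : T = S ∪ (univ.filter (fun v : Fin (n + n ^ 3) => ¬ (v : ℕ) < n)) := by
        ext v
        simp only [hT, hS, mem_union, mem_filter, mem_univ, true_and]
        by_cases h : (v : ℕ) < n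
        · simp only [hf, dif_pos h, h, not_true_eq_false, or_false]
          split_ifs <;> simp
        · simp only [hf, dif_neg h, h, not_false_eq_true, or_true]
          simp
      have hdisj : Disjoint S (univ.filter (fun v : Fin (n + n ^ 3) => ¬ (v : ℕ) < n)) := by
        rw [Finset.disjoint_left]
        intro v hv hv'
        simp only [hS, mem_filter, mem_univ, true_and] at hv
        simp only [mem_filter, mem_univ, true_and] at hv'
        simp only [hf, dif_neg hv'] at hv
        omega
      have hc2 : (univ.filter (fun v : Fin (n + n ^ 3) => ¬ (v : ℕ) < n)).card = n ^ 3 := by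
        have := Finset.card_filter_add_card_filter_not
          (s := (univ : Finset (Fin (n + n ^ 3)))) (p := fun v : Fin (n + n ^ 3) => (v : ℕ) < n)
        rw [card_filter_val_lt (n + n ^ 3) n (by omega)] at this
        simp only [Finset.card_univ, Fintype.card_fin] at this
        omega
      rw [hTeq, Finset.card_union_of_disjoint hdisj, hScard, hc2]
    have H1 : ∀ a ∈ S, ∀ b ∉ S, (π a : ℕ) < (π b : ℕ) := by
      intro a ha b hb
      have hfa : f a = 0 := (mem_filter.1 ha).2
      have hfb : f b ≠ 0 := fun h => hb (mem_filter.2 ⟨mem_univ _, h⟩)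
      have := sort_strict f a b (by omega)
      rw [hπ]
      exact this
    have H2 : ∀ a ∈ T, ∀ b ∉ T, (π a : ℕ) < (π b : ℕ) := by
      intro a ha b hb
      have hfa : f a ≤ 1 := (mem_filter.1 ha).2
      have hfb : ¬ f b ≤ 1 := fun h => hb (mem_filter.2 ⟨mem_univ _, h⟩)
      have := sort_strict f a b (by omega)
      rw [hπ]
      exact this
    obtain ⟨P1, -⟩ := pos_lt_card π S H1
    obtain ⟨-, P2⟩ := pos_lt_card π T H2
    have key : ∀ e ∈ E.filter (fun e => e.1 ∈ X ∧ e.2 ∉ X),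
        n ^ 3 ≤ (π (Fin.castAdd (n ^ 3) e.2) : ℕ) - (π (Fin.castAdd (n ^ 3) e.1) : ℕ) := by
      intro e he
      obtain ⟨heE, h1, h2⟩ := mem_filter.1 he
      have ha : Fin.castAdd (n ^ 3) e.1 ∈ S :=
        mem_filter.2 ⟨mem_univ _, by rw [hfcast, if_pos h1]⟩
      have hb : Fin.castAdd (n ^ 3) e.2 ∉ T := by
        simp only [hT, mem_filter, mem_univ, true_and]
        rw [hfcast, if_neg h2]
        omega
      have k1 := P1 _ ha
      have k2 := P2 _ hb
      rw [hScard] at k1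
      rw [hTcard] at k2
      omega
    have hval : valN (E.image (fun e => (Fin.castAdd (n ^ 3) e.1, Fin.castAdd (n ^ 3) e.2))) π
        = ∑ e ∈ E, ((π (Fin.castAdd (n ^ 3) e.2) : ℕ) - (π (Fin.castAdd (n ^ 3) e.1) : ℕ)) := by
      unfold valN
      rw [Finset.sum_image (fun a _ b _ h => hembinj h)]
    rw [hval]
    calc k * n ^ 3 ≤ dicut E X * n ^ 3 := Nat.mul_le_mul_right _ hX
      _ = ∑ _e ∈ E.filter (fun e => e.1 ∈ X ∧ e.2 ∉ X), n ^ 3 := by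
          rw [Finset.sum_const, smul_eq_mul]; rfl
      _ ≤ ∑ e ∈ E.filter (fun e => e.1 ∈ X ∧ e.2 ∉ X),
            ((π (Fin.castAdd (n ^ 3) e.2) : ℕ) - (π (Fin.castAdd (n ^ 3) e.1) : ℕ)) :=
          Finset.sum_le_sum key
      _ ≤ ∑ e ∈ E, ((π (Fin.castAdd (n ^ 3) e.2) : ℕ) - (π (Fin.castAdd (n ^ 3) e.1) : ℕ)) :=
          Finset.sum_le_sum_of_subset (Finset.filter_subset _ _)
  · rintro ⟨π, hπ⟩
    by_contra hcon
    push_neg at hcon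
    have hval : valN (E.image (fun e => (Fin.castAdd (n ^ 3) e.1, Fin.castAdd (n ^ 3) e.2))) π
        = ∑ e ∈ E, ((π (Fin.castAdd (n ^ 3) e.2) : ℕ) - (π (Fin.castAdd (n ^ 3) e.1) : ℕ)) := by
      unfold valN
      rw [Finset.sum_image (fun a _ b _ h => hembinj h)]
    have hterm : ∀ e : Fin n × Fin n,
        ((π (Fin.castAdd (n ^ 3) e.2) : ℕ) - (π (Fin.castAdd (n ^ 3) e.1) : ℕ))
        = ∑ j ∈ Finset.range (n + n ^ 3),
            (if (π (Fin.castAdd (n ^ 3) e.1) : ℕ) < j ∧ j ≤ (π (Fin.castAdd (n ^ 3) e.2) : ℕ)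
             then 1 else 0) := by
      intro e
      rw [← Finset.card_filter]
      have : (Finset.range (n + n ^ 3)).filter
          (fun j => (π (Fin.castAdd (n ^ 3) e.1) : ℕ) < j ∧ j ≤ (π (Fin.castAdd (n ^ 3) e.2) : ℕ))
          = Finset.Ioc ((π (Fin.castAdd (n ^ 3) e.1) : ℕ)) ((π (Fin.castAdd (n ^ 3) e.2) : ℕ)) := by
        ext j
        simp only [mem_filter, mem_range, mem_Ioc]
        have := (π (Fin.castAdd (n ^ 3) e.2)).is_lt
        constructor
        · rintro ⟨-, h⟩; exact h
        · intro h
          have h2 := (π (Fin.castAdd (n ^ 3) e.2)).is_lt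
          exact ⟨by omega, h⟩
      rw [this, Nat.card_Ioc]
    have hbound : ∀ j : ℕ,
        (∑ e ∈ E, (if (π (Fin.castAdd (n ^ 3) e.1) : ℕ) < j
            ∧ j ≤ (π (Fin.castAdd (n ^ 3) e.2) : ℕ) then 1 else 0)) ≤ k - 1 := by
      intro j
      have heq : (∑ e ∈ E, (if (π (Fin.castAdd (n ^ 3) e.1) : ℕ) < j
            ∧ j ≤ (π (Fin.castAdd (n ^ 3) e.2) : ℕ) then 1 else 0))
          = dicut E (univ.filter (fun v : Fin n => (π (Fin.castAdd (n ^ 3) v) : ℕ) < j)) := by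
        unfold dicut
        rw [Finset.card_filter]
        apply Finset.sum_congr rfl
        intro e _
        congr 1
        simp only [mem_filter, mem_univ, true_and, not_lt, eq_iff_iff]
      rw [heq]
      have := hcon (univ.filter (fun v : Fin n => (π (Fin.castAdd (n ^ 3) v) : ℕ) < j))
      omega
    have hle : valN (E.image (fun e => (Fin.castAdd (n ^ 3) e.1, Fin.castAdd (n ^ 3) e.2))) π
        ≤ (n + n ^ 3) * (k - 1) := by
      rw [hval]
      calc ∑ e ∈ E, ((π (Fin.castAdd (n ^ 3) e.2) : ℕ) - (π (Fin.castAdd (n ^ 3) e.1) : ℕ))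
          = ∑ e ∈ E, ∑ j ∈ Finset.range (n + n ^ 3),
            (if (π (Fin.castAdd (n ^ 3) e.1) : ℕ) < j ∧ j ≤ (π (Fin.castAdd (n ^ 3) e.2) : ℕ)
             then 1 else 0) := Finset.sum_congr rfl (fun e _ => hterm e)
        _ = ∑ j ∈ Finset.range (n + n ^ 3), ∑ e ∈ E,
            (if (π (Fin.castAdd (n ^ 3) e.1) : ℕ) < j ∧ j ≤ (π (Fin.castAdd (n ^ 3) e.2) : ℕ)
             then 1 else 0) := Finset.sum_comm
        _ ≤ ∑ _j ∈ Finset.range (n + n ^ 3), (k - 1) := Finset.sum_le_sum (fun j _ => hbound j)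
        _ = (n + n ^ 3) * (k - 1) := by rw [Finset.sum_const, Finset.card_range, smul_eq_mul]
    have hfin : (n + n ^ 3) * (k - 1) < k * n ^ 3 := by
      obtain ⟨m, rfl⟩ : ∃ m, k = m + 1 := ⟨k - 1, by omega⟩
      simp only [Nat.add_sub_cancel]
      have h1 : m + 1 ≤ n ^ 2 := hk2
      have h2 : n * (m + 1) ≤ n * n ^ 2 := Nat.mul_le_mul_left n h1
      have h3 : n * n ^ 2 = n ^ 3 := by ring
      nlinarith [h2, hn]
    omega
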